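/- arXiv:1705.04037 — 2 statements merged into one kernel-verified Lean document; each statement's English description precedes it below -/
import Mathlib

section
/- Let R be a subset of a topological space X. Then R is comeager in X if and only if player α has a winning strategy in the Banach–Mazur game BM(R) played on X. -/
open Filter Set Topology


/-- A legal history in a game where players alternately choose nonempty open sets
forming a decreasing sequence. -/
def LegalHistory {X : Type*} [TopologicalSpace X] (l : List (Set X)) : Prop :=
  (∀ U ∈ l, IsOpen U ∧ U.Nonempty) ∧ l.Chain' fun U V => V ⊆ U

/-- A winning strategy for player α (who moves second, i.e. at odd 0-indexed positions)
in the Banach–Mazur game `BM(R)`: the strategy produces a legal move after every legal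
odd-length history, and whenever a run of the game follows the strategy, the
intersection of the moves is contained in `R`. -/
def IsWinningStrategyAlphaBM {X : Type*} [TopologicalSpace X] (R : Set X)
    (σ : List (Set X) → Set X) : Prop :=
  (∀ l : List (Set X), LegalHistory l → l.length % 2 = 1 →
      IsOpen (σ l) ∧ (σ l).Nonempty ∧ ∀ U ∈ l.getLast?, σ l ⊆ U) ∧
  ∀ B : ℕ → Set X,
    (∀ n, IsOpen (B n) ∧ (B n).Nonempty) →
    (∀ n, B (n + 1) ⊆ B n) →
    (∀ k, B (2 * k + 1) = σ (List.ofFn fun i : Fin (2 * k + 1) => B i)) →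
    (⋂ n, B n) ⊆ R

namespace BMaux

variable {X : Type*} [TopologicalSpace X]

/-- Last entry of a history, defaulting to `univ`. -/
def lastD (l : List (Set X)) : Set X := l.getLast?.getD univ

lemma lastD_nil : lastD ([] : List (Set X)) = univ := rfl

lemma lastD_concat (l : List (Set X)) (B : Set X) : lastD (l ++ [B]) = B := by
  simp [lastD, List.getLast?_concat]

lemma lastD_open {l : List (Set X)} (H : LegalHistory l) : IsOpen (lastD l) := by
  rcases eq_or_ne l [] with rfl | hne
  · simpa [lastD] using isOpen_univ
  · rw [lastD, List.getLast?_eq_getLast hne]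
    exact (H.1 _ (List.getLast_mem hne)).1

lemma legal_nil : LegalHistory ([] : List (Set X)) := ⟨by simp, List.isChain_nil⟩

lemma legal_snoc {l : List (Set X)} {B : Set X} (H : LegalHistory l)
    (hB : IsOpen B) (hBne : B.Nonempty) (hsub : B ⊆ lastD l) :
    LegalHistory (l ++ [B]) := by
  constructor
  · intro U hU
    rcases List.mem_append.1 hU with h | h
    · exact H.1 U h
    · simp only [List.mem_singleton] at h; subst h; exact ⟨hB, hBne⟩
  · show List.IsChain _ (l ++ [B])
    rw [List.isChain_append]
    refine ⟨H.2, List.isChain_singleton _, ?_⟩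
    intro x hx y hy
    simp only [List.head?_cons, Option.mem_def, Option.some.injEq] at hy
    subst hy
    rwa [lastD, hx] at hsub

/-- σ-compatible legal even-length histories. -/
def GoodH (σ : List (Set X) → Set X) (l : List (Set X)) : Prop :=
  LegalHistory l ∧ l.length % 2 = 0 ∧
    ∀ m (hm : m < l.length), m % 2 = 1 → l[m] = σ (l.take m)

lemma goodH_nil (σ : List (Set X) → Set X) : GoodH σ [] :=
  ⟨legal_nil, rfl, by simp⟩

/-- Extend an even-length history by a β-move `B` and α's response `σ (h ++ [B])`. -/
def ext (σ : List (Set X) → Set X) (h : List (Set X)) (B : Set X) : List (Set X) :=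
  (h ++ [B]) ++ [σ (h ++ [B])]

/-- The legality hypothesis on a strategy. -/
def StratLegal (σ : List (Set X) → Set X) : Prop :=
  ∀ l : List (Set X), LegalHistory l → l.length % 2 = 1 →
    IsOpen (σ l) ∧ (σ l).Nonempty ∧ ∀ U ∈ l.getLast?, σ l ⊆ U

lemma step_lemma {σ : List (Set X) → Set X} (Hσ : StratLegal σ)
    {h : List (Set X)} {B : Set X} (H : GoodH σ h)
    (hB : IsOpen B) (hBne : B.Nonempty) (hsub : B ⊆ lastD h) :
    GoodH σ (ext σ h B) ∧ IsOpen (σ (h ++ [B])) ∧ (σ (h ++ [B])).Nonempty ∧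
      σ (h ++ [B]) ⊆ B ∧ lastD (ext σ h B) = σ (h ++ [B]) ∧
      (ext σ h B).length = h.length + 2 ∧ h <+: ext σ h B := by
  have h1 : LegalHistory (h ++ [B]) := legal_snoc H.1 hB hBne hsub
  have hlen1 : (h ++ [B]).length = h.length + 1 := by simp
  have heven := H.2.1
  have hodd : (h ++ [B]).length % 2 = 1 := by omega
  obtain ⟨hso, hsne, hssub⟩ := Hσ (h ++ [B]) h1 hodd
  have hsubB : σ (h ++ [B]) ⊆ B := hssub B (by simp [List.getLast?_concat])
  have hlastsub : σ (h ++ [B]) ⊆ lastD (h ++ [B]) := by rw [lastD_concat]; exact hsubB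
  have h2 : LegalHistory (ext σ h B) := legal_snoc h1 hso hsne hlastsub
  have hlen2 : (ext σ h B).length = h.length + 2 := by simp [ext]
  have hpre : h <+: ext σ h B := by
    refine ⟨[B] ++ [σ (h ++ [B])], ?_⟩
    simp [ext]
  refine ⟨⟨h2, by omega, ?_⟩, hso, hsne, hsubB, lastD_concat (h ++ [B]) (σ (h ++ [B])), hlen2, hpre⟩
  intro m hm hm1
  rw [hlen2] at hm
  have heq : h.length % 2 = 0 := heven
  rcases show m < h.length ∨ m = h.length + 1 by omega with hlt | rfl
  · have hm' : m < (h ++ [B]).length := by simpa using Nat.lt_succ_of_lt hlt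
    have e1 : (ext σ h B)[m]'(by omega) = h[m]'hlt := by
      simp only [ext]
      rw [List.getElem_append_left (by simpa using Nat.lt_succ_of_lt hlt),
        List.getElem_append_left hlt]
    have e2 : (ext σ h B).take m = h.take m := by
      simp only [ext]
      rw [List.take_append_of_le_length (by simp; omega),
        List.take_append_of_le_length (by omega)]
    rw [e1, e2]
    exact H.2.2 m hlt hm1
  · have e1 : (ext σ h B)[h.length + 1]'(by omega) = σ (h ++ [B]) :=
      List.getElem_concat_length (by simp) _
    have e2 : (ext σ h B).take (h.length + 1) = h ++ [B] := by
      simp only [ext]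
      rw [List.take_append_of_le_length (by simp)]
      simp
    rw [e1, e2]


lemma exists_fam (σ : List (Set X) → Set X) (h : List (Set X)) :
    ∃ 𝒜 : Set (Set X), StratLegal σ → GoodH σ h →
      (∀ B ∈ 𝒜, IsOpen B ∧ B.Nonempty ∧ B ⊆ lastD h) ∧
      (∀ B ∈ 𝒜, ∀ B' ∈ 𝒜, B ≠ B' → Disjoint (σ (h ++ [B])) (σ (h ++ [B']))) ∧
      lastD h ⊆ closure (⋃ B ∈ 𝒜, σ (h ++ [B])) := by
  by_cases Hall : StratLegal σ ∧ GoodH σ h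
  swap
  · exact ⟨∅, fun h1 h2 => absurd ⟨h1, h2⟩ Hall⟩
  obtain ⟨Hσ, H⟩ := Hall
  set S : Set (Set (Set X)) := {𝒜 | (∀ B ∈ 𝒜, IsOpen B ∧ B.Nonempty ∧ B ⊆ lastD h) ∧
      (∀ B ∈ 𝒜, ∀ B' ∈ 𝒜, B ≠ B' → Disjoint (σ (h ++ [B])) (σ (h ++ [B'])))} with hS
  obtain ⟨m, hm⟩ : ∃ m, Maximal (· ∈ S) m := by
    apply zorn_subset
    intro c hcS hchain
    refine ⟨⋃₀ c, ⟨?_, ?_⟩, fun s hs => subset_sUnion_of_mem hs⟩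
    · rintro B ⟨t, htc, hBt⟩
      exact (hcS htc).1 B hBt
    · rintro B ⟨t, htc, hBt⟩ B' ⟨t', htc', hBt'⟩ hne
      rcases hchain.total htc htc' with hsub | hsub
      · exact (hcS htc').2 B (hsub hBt) B' hBt' hne
      · exact (hcS htc).2 B hBt B' (hsub hBt') hne
  refine ⟨m, fun _ _ => ⟨hm.1.1, hm.1.2, ?_⟩⟩
  -- density of the union of σ-values over the maximal family
  by_contra hnd
  rw [Set.not_subset] at hnd
  obtain ⟨x, hxA, hxcl⟩ := hnd
  set U : Set X := ⋃ B ∈ m, σ (h ++ [B]) with hU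
  set V : Set X := (closure U)ᶜ ∩ lastD h with hV
  have hVopen : IsOpen V := (isClosed_closure.isOpen_compl).inter (lastD_open H.1)
  have hVne : V.Nonempty := ⟨x, hxcl, hxA⟩
  have hVsub : V ⊆ lastD h := inter_subset_right
  obtain ⟨-, -, -, hsubV, -, -, -⟩ := step_lemma Hσ H hVopen hVne hVsub
  have hVU : V ∩ U = ∅ := by
    rw [eq_empty_iff_forall_notMem]
    rintro y ⟨⟨hy1, -⟩, hy2⟩
    exact hy1 (subset_closure hy2)
  have hVnotm : V ∉ m := by
    intro hmem
    obtain ⟨y, hy⟩ := (Hσ (h ++ [V]) (legal_snoc H.1 hVopen hVne hVsub)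
      (by have := H.2.1; simp; omega)).2.1
    have hyU : y ∈ U := mem_biUnion hmem hy
    have hyV : y ∈ V := hsubV hy
    exact absurd (Set.eq_empty_iff_forall_notMem.1 hVU y) (by simp [hyV, hyU])
  have hins : insert V m ∈ S := by
    constructor
    · rintro B (rfl | hB)
      · exact ⟨hVopen, hVne, hVsub⟩
      · exact hm.1.1 B hB
    · have key : ∀ B' ∈ m, Disjoint (σ (h ++ [V])) (σ (h ++ [B'])) := by
        intro B' hB'
        refine Set.disjoint_left.2 fun y hy1 hy2 => ?_
        have hyV : y ∈ V := hsubV hy1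
        have hyU : y ∈ U := mem_biUnion hB' hy2
        exact absurd (Set.eq_empty_iff_forall_notMem.1 hVU y) (by simp [hyV, hyU])
      rintro B (rfl | hB) B' (rfl | hB') hne
      · exact absurd rfl hne
      · exact key B' hB'
      · exact (key B hB).symm
      · exact hm.1.2 B hB B' hB' hne
  exact hVnotm (hm.2 hins (subset_insert V m) (mem_insert V m))

/-- The chosen maximal antichain of β-moves after a history. -/
noncomputable def fam (σ : List (Set X) → Set X) (h : List (Set X)) : Set (Set X) :=
  (exists_fam σ h).choose

lemma fam_spec {σ : List (Set X) → Set X} (Hσ : StratLegal σ) {h : List (Set X)}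
    (H : GoodH σ h) :
    (∀ B ∈ fam σ h, IsOpen B ∧ B.Nonempty ∧ B ⊆ lastD h) ∧
    (∀ B ∈ fam σ h, ∀ B' ∈ fam σ h, B ≠ B' → Disjoint (σ (h ++ [B])) (σ (h ++ [B']))) ∧
    lastD h ⊆ closure (⋃ B ∈ fam σ h, σ (h ++ [B])) :=
  (exists_fam σ h).choose_spec Hσ H


/-- The tree of positions, level by level. -/
def tree (σ : List (Set X) → Set X) : ℕ → Set (List (Set X))
  | 0 => {l | ∃ B ∈ fam σ [], l = ext σ [] B}
  | n + 1 => {l | ∃ h ∈ tree σ n, ∃ B ∈ fam σ h, l = ext σ h B}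

variable {σ : List (Set X) → Set X}

lemma tree_good (Hσ : StratLegal σ) :
    ∀ n, ∀ h ∈ tree σ n, GoodH σ h ∧ h.length = 2 * n + 2 := by
  intro n
  induction n with
  | zero =>
    rintro l ⟨B, hB, rfl⟩
    obtain ⟨hBo, hBne, hBsub⟩ := (fam_spec Hσ (goodH_nil σ)).1 B hB
    obtain ⟨hg, -, -, -, -, hlen, -⟩ := step_lemma Hσ (goodH_nil σ) hBo hBne hBsub
    exact ⟨hg, by simpa using hlen⟩
  | succ n ih =>
    rintro l ⟨p, hp, B, hB, rfl⟩
    obtain ⟨hpg, hplen⟩ := ih p hp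
    obtain ⟨hBo, hBne, hBsub⟩ := (fam_spec Hσ hpg).1 B hB
    obtain ⟨hg, -, -, -, -, hlen, -⟩ := step_lemma Hσ hpg hBo hBne hBsub
    exact ⟨hg, by omega⟩

lemma tree_lastD (Hσ : StratLegal σ) {p : List (Set X)} {B : Set X}
    (hpg : GoodH σ p) (hB : B ∈ fam σ p) :
    lastD (ext σ p B) = σ (p ++ [B]) ∧ lastD (ext σ p B) ⊆ B ∧ B ⊆ lastD p ∧
      IsOpen (lastD (ext σ p B)) ∧ (lastD (ext σ p B)).Nonempty ∧ p <+: ext σ p B := by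
  obtain ⟨hBo, hBne, hBsub⟩ := (fam_spec Hσ hpg).1 B hB
  obtain ⟨-, ho, hne, hsub, hl, -, hpre⟩ := step_lemma Hσ hpg hBo hBne hBsub
  rw [hl]
  exact ⟨rfl, hsub, hBsub, ho, hne, hpre⟩

lemma tree_disj (Hσ : StratLegal σ) :
    ∀ n, ∀ h ∈ tree σ n, ∀ h' ∈ tree σ n, h ≠ h' → Disjoint (lastD h) (lastD h') := by
  intro n
  induction n with
  | zero =>
    rintro l ⟨B, hB, rfl⟩ l' ⟨B', hB', rfl⟩ hne
    have hBB : B ≠ B' := fun e => hne (by rw [e])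
    rw [(tree_lastD Hσ (goodH_nil σ) hB).1, (tree_lastD Hσ (goodH_nil σ) hB').1]
    exact (fam_spec Hσ (goodH_nil σ)).2.1 B hB B' hB' hBB
  | succ n ih =>
    rintro l ⟨p, hp, B, hB, rfl⟩ l' ⟨p', hp', B', hB', rfl⟩ hne
    have hpg := (tree_good Hσ n p hp).1
    have hpg' := (tree_good Hσ n p' hp').1
    rcases eq_or_ne p p' with rfl | hpp
    · have hBB : B ≠ B' := fun e => hne (by rw [e])
      rw [(tree_lastD Hσ hpg hB).1, (tree_lastD Hσ hpg hB').1]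
      exact (fam_spec Hσ hpg).2.1 B hB B' hB' hBB
    · have d := ih p hp p' hp' hpp
      exact d.mono ((tree_lastD Hσ hpg hB).2.1.trans (tree_lastD Hσ hpg hB).2.2.1)
        ((tree_lastD Hσ hpg' hB').2.1.trans (tree_lastD Hσ hpg' hB').2.2.1)

lemma tree_dense (Hσ : StratLegal σ) :
    ∀ n, Dense (⋃ h ∈ tree σ n, lastD h) := by
  have key : ∀ (p : List (Set X)), GoodH σ p →
      lastD p ⊆ closure (⋃ B ∈ fam σ p, lastD (ext σ p B)) := by
    intro p hpg
    have := (fam_spec Hσ hpg).2.2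
    refine this.trans (closure_mono ?_)
    refine iUnion₂_subset fun B hB => ?_
    rw [← (tree_lastD Hσ hpg hB).1]
    exact subset_biUnion_of_mem (u := fun B => lastD (ext σ p B)) hB
  intro n
  induction n with
  | zero =>
    rw [dense_iff_closure_eq, Set.eq_univ_iff_forall]
    intro x
    have := key [] (goodH_nil σ)
    rw [lastD_nil] at this
    refine closure_mono ?_ (this (mem_univ x))
    refine iUnion₂_subset fun B hB => ?_
    exact subset_biUnion_of_mem (show ext σ [] B ∈ tree σ 0 from ⟨B, hB, rfl⟩)
  | succ n ih =>
    rw [dense_iff_closure_eq, Set.eq_univ_iff_forall]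
    intro x
    have step : (⋃ h ∈ tree σ n, lastD h) ⊆ closure (⋃ h ∈ tree σ (n+1), lastD h) := by
      refine iUnion₂_subset fun p hp => ?_
      have hpg := (tree_good Hσ n p hp).1
      refine (key p hpg).trans (closure_mono ?_)
      refine iUnion₂_subset fun B hB => ?_
      exact subset_biUnion_of_mem (show ext σ p B ∈ tree σ (n+1) from ⟨p, hp, B, hB, rfl⟩)
    have : closure (⋃ h ∈ tree σ n, lastD h) ⊆ closure (⋃ h ∈ tree σ (n+1), lastD h) := by
      rw [← closure_closure (s := ⋃ h ∈ tree σ (n+1), lastD h)]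
      exact closure_mono step
    exact this (by rw [dense_iff_closure_eq.1 ih]; exact mem_univ x)

lemma tree_open (Hσ : StratLegal σ) (n : ℕ) : IsOpen (⋃ h ∈ tree σ n, lastD h) :=
  isOpen_biUnion fun p hp => lastD_open (tree_good Hσ n p hp).1.1


lemma legal_getElem_subset {l : List (Set X)} (H : LegalHistory l) {i j : ℕ}
    (hij : i ≤ j) (hj : j < l.length) : l[j] ⊆ l[i]'(lt_of_le_of_lt hij hj) := by
  induction j with
  | zero =>
    have : i = 0 := Nat.le_zero.1 hij
    subst this; exact subset_rfl
  | succ j ih =>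
    rcases Nat.le_succ_iff.1 hij with hle | rfl
    · have hstep : l[j + 1] ⊆ l[j]'(by omega) := by
        have := List.isChain_iff_getElem.1 H.2 j (by omega)
        simpa [List.get_eq_getElem] using this
      exact hstep.trans (ih hle (by omega))
    · exact subset_rfl

lemma lastD_eq_getElem {l : List (Set X)} (h : l ≠ []) :
    lastD l = l[l.length - 1]'(by
      have := List.length_pos_iff.2 h; omega) := by
  rw [lastD, List.getLast?_eq_getElem?, List.getElem?_eq_getElem]; rfl

lemma mem_residual_of_strategy {R : Set X} (Hσ : StratLegal σ)
    (Hwin : ∀ B : ℕ → Set X, (∀ n, IsOpen (B n) ∧ (B n).Nonempty) →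
      (∀ n, B (n + 1) ⊆ B n) →
      (∀ k, B (2 * k + 1) = σ (List.ofFn fun i : Fin (2 * k + 1) => B i)) →
      (⋂ n, B n) ⊆ R) :
    R ∈ residual X := by
  have hGmem : ∀ n, (⋃ h ∈ tree σ n, lastD h) ∈ residual X := fun n =>
    residual_of_dense_open (tree_open Hσ n) (tree_dense Hσ n)
  refine mem_of_superset (countable_iInter_mem.2 hGmem) ?_
  intro x hx
  have hxG : ∀ n, x ∈ ⋃ h ∈ tree σ n, lastD h := mem_iInter.1 hx
  have step : ∀ n (h : List (Set X)), h ∈ tree σ n → x ∈ lastD h →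
      ∃ g, g ∈ tree σ (n + 1) ∧ x ∈ lastD g ∧ h <+: g := by
    intro n h hh hxh
    obtain ⟨g, hg, hxg⟩ := mem_iUnion₂.1 (hxG (n + 1))
    obtain ⟨p, hp, B, hB, rfl⟩ := hg
    have hpg := (tree_good Hσ n p hp).1
    have hxp : x ∈ lastD p :=
      ((tree_lastD Hσ hpg hB).2.1.trans (tree_lastD Hσ hpg hB).2.2.1) hxg
    have hph : p = h := by
      by_contra hne
      exact Set.disjoint_left.1 (tree_disj Hσ n p hp h hh hne) hxp hxh
    subst hph
    exact ⟨ext σ p B, ⟨p, hp, B, hB, rfl⟩, hxg, (tree_lastD Hσ hpg hB).2.2.2.2.2⟩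
  obtain ⟨h0, hh0, hxh0⟩ := mem_iUnion₂.1 (hxG 0)
  choose g hg1 hg2 hg3 using step
  let F : (n : ℕ) → {l : List (Set X) // l ∈ tree σ n ∧ x ∈ lastD l} :=
    fun n => Nat.rec ⟨h0, hh0, hxh0⟩
      (fun k p => ⟨g k p.1 p.2.1 p.2.2, hg1 k p.1 p.2.1 p.2.2, hg2 k p.1 p.2.1 p.2.2⟩) n
  have Fpre : ∀ n, (F n).1 <+: (F (n + 1)).1 := fun n => hg3 n (F n).1 (F n).2.1 (F n).2.2
  have Fmono : ∀ m n, m ≤ n → (F m).1 <+: (F n).1 := by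
    intro m n hmn
    induction n with
    | zero =>
      have : m = 0 := Nat.le_zero.1 hmn
      subst this; exact List.prefix_refl _
    | succ n ih =>
      rcases Nat.le_succ_iff.1 hmn with hle | rfl
      · exact (ih hle).trans (Fpre n)
      · exact List.prefix_refl _
  have Flen : ∀ n, (F n).1.length = 2 * n + 2 := fun n =>
    (tree_good Hσ n (F n).1 (F n).2.1).2
  have Fgood : ∀ n, GoodH σ (F n).1 := fun n => (tree_good Hσ n (F n).1 (F n).2.1).1
  set B : ℕ → Set X := fun n => (F n).1.getD n ∅ with hBdef
  have hBself : ∀ n, B n = (F n).1[n]'(by rw [Flen]; omega) := fun n =>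
    List.getD_eq_getElem _ _ _
  have hBval : ∀ n m, (hm : n < (F m).1.length) → B n = (F m).1[n] := by
    intro n m hm
    rw [hBself n]
    rcases le_total n m with hle | hle
    · exact (Fmono n m hle).getElem _
    · exact ((Fmono m n hle).getElem hm).symm
  have hBopen : ∀ n, IsOpen (B n) ∧ (B n).Nonempty := by
    intro n
    rw [hBself n]
    exact (Fgood n).1.1 _ (List.getElem_mem _)
  have hBmono : ∀ n, B (n + 1) ⊆ B n := by
    intro n
    have hlt : n + 1 < (F (n + 1)).1.length := by rw [Flen]; omega
    rw [hBval n (n + 1) (by omega), hBval (n + 1) (n + 1) hlt]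
    exact legal_getElem_subset (Fgood (n + 1)).1 (Nat.le_succ n) hlt
  have hBσ : ∀ k, B (2 * k + 1) = σ (List.ofFn fun i : Fin (2 * k + 1) => B i) := by
    intro k
    have hlen : (F (2 * k + 1)).1.length = 2 * (2 * k + 1) + 2 := Flen (2 * k + 1)
    have hlt : 2 * k + 1 < (F (2 * k + 1)).1.length := by rw [Flen]; omega
    have hofn : (List.ofFn fun i : Fin (2 * k + 1) => B i) =
        (F (2 * k + 1)).1.take (2 * k + 1) := by
      apply List.ext_getElem
      · rw [List.length_ofFn, List.length_take, Flen]; omega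
      · intro i h1 h2
        rw [List.getElem_ofFn, List.getElem_take]
        exact hBval i (2 * k + 1) (by rw [Flen]; rw [List.length_ofFn] at h1; omega)
    rw [hofn, hBval (2 * k + 1) (2 * k + 1) hlt]
    exact (Fgood (2 * k + 1)).2.2 (2 * k + 1) hlt (by omega)
  have hxB : ∀ n, x ∈ B n := by
    intro n
    have hne : (F n).1 ≠ [] := by
      intro e
      have := Flen n
      rw [e] at this
      simp at this
    have hx' : x ∈ (F n).1[(F n).1.length - 1]'(by rw [Flen]; omega) := by
      rw [← lastD_eq_getElem hne]
      exact (F n).2.2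
    rw [hBval n n (by rw [Flen]; omega)]
    exact legal_getElem_subset (Fgood n).1 (by rw [Flen]; omega)
      (by rw [Flen]; omega) hx'
  exact Hwin B hBopen hBmono hBσ (mem_iInter.2 hxB)

end BMaux

/-- Oxtoby's theorem: `R` is comeager in `X` iff player α has a winning strategy in the
Banach–Mazur game `BM(R)`. -/
theorem comeager_iff_winning_strategy_BM {X : Type*} [TopologicalSpace X] (R : Set X) :
    R ∈ residual X ↔ ∃ σ : List (Set X) → Set X, IsWinningStrategyAlphaBM R σ := by
  constructor
  · intro hR
    obtain ⟨S, hSo, hSd, hSc, hSsub⟩ := mem_residual_iff.1 hR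
    obtain ⟨f, hf⟩ := (hSc.insert univ).exists_eq_range ⟨univ, mem_insert _ _⟩
    have hfmem : ∀ n, f n ∈ insert univ S := fun n => hf ▸ mem_range_self n
    have hfo : ∀ n, IsOpen (f n) := by
      intro n
      rcases hfmem n with h | h
      · rw [h]; exact isOpen_univ
      · exact hSo _ h
    have hfd : ∀ n, Dense (f n) := by
      intro n
      rcases hfmem n with h | h
      · rw [h]; exact dense_univ
      · exact hSd _ h
    have hfsub : (⋂ n, f n) ⊆ R := by
      have : ⋂ n, f n = ⋂₀ insert univ S := by rw [hf, sInter_range]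
      rw [this, sInter_insert]
      exact inter_subset_right.trans hSsub
    refine ⟨fun l => BMaux.lastD l ∩ f (l.length / 2), ?_, ?_⟩
    · intro l hl hodd
      have hne : l ≠ [] := by
        intro e; rw [e] at hodd; simp at hodd
      have hAo : IsOpen (BMaux.lastD l) := BMaux.lastD_open hl
      have hAne : (BMaux.lastD l).Nonempty := by
        rw [BMaux.lastD_eq_getElem hne]
        exact (hl.1 _ (List.getElem_mem _)).2
      refine ⟨hAo.inter (hfo _), ?_, ?_⟩
      · exact (hfd _).inter_open_nonempty _ hAo hAne
      · intro U hU
        have : BMaux.lastD l = U := by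
          rw [BMaux.lastD, Option.mem_def.1 hU]; rfl
        rw [← this]
        exact inter_subset_left
    · intro B hBo hBm hBσ
      refine subset_trans ?_ hfsub
      refine subset_iInter fun k => ?_
      refine (iInter_subset B (2 * k + 1)).trans ?_
      rw [hBσ k]
      show BMaux.lastD _ ∩ f ((List.ofFn fun i : Fin (2 * k + 1) => B i).length / 2) ⊆ f k
      rw [List.length_ofFn]
      have hdiv : (2 * k + 1) / 2 = k := by omega
      rw [hdiv]
      exact inter_subset_right
  · rintro ⟨σ, hσ1, hσ2⟩
    exact BMaux.mem_residual_of_strategy hσ1 hσ2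
end

section
/- A topological space X is a Baire space if and only if player β does not have a winning strategy in the Choquet game 𝒢(X) played on X. -/
open Filter Set Topology


/-- A winning strategy for player β (who moves first, i.e. at even 0-indexed positions)
in the Choquet game on `X`: the strategy produces a legal move after every legal
even-length history, and whenever a run of the game follows the strategy, the
intersection of the moves is empty. -/
def IsWinningStrategyBetaChoquet (X : Type*) [TopologicalSpace X]
    (σ : List (Set X) → Set X) : Prop :=
  (∀ l : List (Set X), LegalHistory l → l.length % 2 = 0 →
      IsOpen (σ l) ∧ (σ l).Nonempty ∧ ∀ U ∈ l.getLast?, σ l ⊆ U) ∧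
  ∀ B : ℕ → Set X,
    (∀ n, IsOpen (B n) ∧ (B n).Nonempty) →
    (∀ n, B (n + 1) ⊆ B n) →
    (∀ k, B (2 * k) = σ (List.ofFn fun i : Fin (2 * k) => B i)) →
    (⋂ n, B n) = ∅

namespace ChoquetAux

variable {X : Type*} [TopologicalSpace X]

/-- The last move of a history. -/
def lastD (l : List (Set X)) : Set X := l.getLast?.getD ∅

lemma legal_nil : LegalHistory ([] : List (Set X)) := ⟨by simp, List.isChain_nil⟩

lemma legal_append_singleton {l : List (Set X)} {V : Set X} (hl : LegalHistory l)
    (hV : IsOpen V) (hVne : V.Nonempty) (hsub : ∀ U ∈ l.getLast?, V ⊆ U) :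
    LegalHistory (l ++ [V]) := by
  constructor
  · intro U hU
    rcases List.mem_append.1 hU with h | h
    · exact hl.1 U h
    · simp only [List.mem_singleton] at h; subst h; exact ⟨hV, hVne⟩
  · show List.IsChain (fun U V : Set X => V ⊆ U) (l ++ [V])
    rw [List.isChain_append]
    refine ⟨hl.2, List.isChain_singleton _, ?_⟩
    intro x hx y hy
    simp only [List.head?_cons, Option.mem_some_iff] at hy; subst hy
    exact hsub x hx

lemma legal_prefix {l₁ l₂ : List (Set X)} (h : l₁ <+: l₂) (hl : LegalHistory l₂) :
    LegalHistory l₁ := ⟨fun U hU => hl.1 U (h.subset hU), hl.2.prefix h⟩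

/-- Entries of a legal history are decreasing. -/
lemma legal_getElem_subset {l : List (Set X)} (hl : LegalHistory l) {i j : ℕ}
    (hij : i ≤ j) (hj : j < l.length) : l[j]'hj ⊆ l[i]'(lt_of_le_of_lt hij hj) := by
  rcases eq_or_lt_of_le hij with rfl | hij
  · rfl
  · haveI : IsTrans (Set X) (fun U V => V ⊆ U) := ⟨fun _ _ _ h1 h2 => h2.trans h1⟩
    have hp : l.Pairwise fun U V => V ⊆ U := List.isChain_iff_pairwise.1 hl.2
    exact List.pairwise_iff_getElem.1 hp i j _ hj hij

lemma lastD_of_ne_nil {l : List (Set X)} (h : l ≠ []) :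
    lastD l = l[l.length - 1]'(by
      have : 0 < l.length := List.length_pos_iff.2 h
      omega) := by
  rw [lastD, List.getLast?_eq_getElem?, List.getElem?_eq_getElem]
  rfl

lemma prefix_getD {l₁ l₂ : List (Set X)} (h : l₁ <+: l₂) {m : ℕ} (hm : m < l₁.length) :
    l₁.getD m ∅ = l₂.getD m ∅ := by
  rw [List.getD_eq_getElem?_getD, List.getD_eq_getElem?_getD,
    List.getElem?_eq_getElem hm, List.getElem?_eq_getElem (lt_of_lt_of_le hm h.length_le)]
  simp [h.getElem hm]

lemma getD_eq_getElem' (l : List (Set X)) {m : ℕ} (hm : m < l.length) :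
    l.getD m ∅ = l[m]'hm := by
  rw [List.getD_eq_getElem?_getD, List.getElem?_eq_getElem hm]; rfl

lemma lastD_append_pair (p : List (Set X)) (V W : Set X) :
    lastD (p ++ [V, W]) = W := by
  rw [lastD, List.getLast?_append]; rfl

section Strategy

variable (σ : List (Set X) → Set X)

/-- A good family of answers of `α` after history `p`: legal moves whose `σ`-responses
are pairwise disjoint. -/
def Good (p : List (Set X)) (A : Set (Set X)) : Prop :=
  (∀ V ∈ A, IsOpen V ∧ V.Nonempty ∧ V ⊆ lastD p) ∧
  A.Pairwise fun V W => Disjoint (σ (p ++ [V])) (σ (p ++ [W]))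

lemma exists_maxGood (p : List (Set X)) :
    ∃ A, Good σ p A ∧ ∀ B, Good σ p B → A ⊆ B → B ⊆ A := by
  have hz : ∀ c ⊆ {A | Good σ p A}, IsChain (· ⊆ ·) c → ∃ ub ∈ {A | Good σ p A}, ∀ s ∈ c, s ⊆ ub := by
    intro c hc hchain
    refine ⟨⋃₀ c, ?_, fun s hs => Set.subset_sUnion_of_mem hs⟩
    constructor
    · rintro V ⟨A, hA, hV⟩
      exact (hc hA).1 V hV
    · rintro V ⟨A₁, hA₁, hV⟩ W ⟨A₂, hA₂, hW⟩ hVW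
      rcases hchain.total hA₁ hA₂ with h | h
      · exact (hc hA₂).2 (h hV) hW hVW
      · exact (hc hA₁).2 hV (h hW) hVW
  obtain ⟨m, hm⟩ := zorn_subset {A | Good σ p A} hz
  exact ⟨m, hm.1, fun B hB hmB => hm.2 hB hmB⟩

/-- A choice of a maximal good family. -/
noncomputable def Amax (p : List (Set X)) : Set (Set X) := (exists_maxGood σ p).choose

lemma Amax_good (p : List (Set X)) : Good σ p (Amax σ p) := (exists_maxGood σ p).choose_spec.1

lemma Amax_max (p : List (Set X)) {B : Set (Set X)} (hB : Good σ p B)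
    (h : Amax σ p ⊆ B) : B ⊆ Amax σ p := (exists_maxGood σ p).choose_spec.2 B hB h

/-- The tree of positions (of `α`-to-move histories) compatible with `σ` and the
maximal families. -/
def P : ℕ → Set (List (Set X))
  | 0 => {[σ []]}
  | n + 1 => ⋃ p ∈ P n, (fun V => p ++ [V, σ (p ++ [V])]) '' Amax σ p

/-- A history follows `σ`. -/
def FollowsSigma (p : List (Set X)) : Prop :=
  ∀ k, 2 * k < p.length → p.getD (2 * k) ∅ = σ (p.take (2 * k))

variable {σ}
variable (hσ : ∀ l : List (Set X), LegalHistory l → l.length % 2 = 0 →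
      IsOpen (σ l) ∧ (σ l).Nonempty ∧ ∀ U ∈ l.getLast?, σ l ⊆ U)
include hσ

lemma P_legal : ∀ n, ∀ p ∈ P σ n,
    LegalHistory p ∧ p.length = 2 * n + 1 ∧ FollowsSigma σ p := by
  intro n
  induction n with
  | zero =>
    rintro p hp
    simp only [P, Set.mem_singleton_iff] at hp
    subst hp
    obtain ⟨h1, h2, _⟩ := hσ [] legal_nil rfl
    refine ⟨⟨by simpa using ⟨h1, h2⟩, List.isChain_singleton _⟩, by simp, ?_⟩
    intro k hk
    simp only [List.length_singleton] at hk
    have hk0 : k = 0 := by omega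
    subst hk0
    simp
  | succ n ih =>
    rintro p' hp'
    simp only [P, Set.mem_iUnion] at hp'
    obtain ⟨p, hp, V, hV, rfl⟩ := hp'
    obtain ⟨hleg, hlen, hfol⟩ := ih p hp
    obtain ⟨hVo, hVne, hVsub⟩ := (Amax_good σ p).1 V hV
    have hpne : p ≠ [] := by intro h; simp [h] at hlen
    have hVsub' : ∀ U ∈ p.getLast?, V ⊆ U := by
      intro U hU
      have : p.getLast? = some (lastD p) := by
        rw [lastD, List.getLast?_eq_getLast hpne]; rfl
      rw [this] at hU
      simp only [Option.mem_some_iff] at hU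
      subst hU; exact hVsub
    have hlegV : LegalHistory (p ++ [V]) := legal_append_singleton hleg hVo hVne hVsub'
    have hlenV : (p ++ [V]).length % 2 = 0 := by simp [hlen]; omega
    obtain ⟨hWo, hWne, hWsub⟩ := hσ (p ++ [V]) hlegV hlenV
    have hWsub' : σ (p ++ [V]) ⊆ V := by
      apply hWsub
      rw [List.getLast?_append]
      simp
    have key : p ++ [V, σ (p ++ [V])] = (p ++ [V]) ++ [σ (p ++ [V])] := by simp
    have hleg2 : LegalHistory (p ++ [V, σ (p ++ [V])]) := by
      rw [key]
      refine legal_append_singleton hlegV hWo hWne ?_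
      intro U hU
      rw [List.getLast?_append] at hU
      simp only [List.getLast?_singleton, Option.some_or, Option.mem_some_iff] at hU
      subst hU; exact hWsub'
    refine ⟨hleg2, by simp [hlen]; omega, ?_⟩
    intro k hk
    simp only [List.length_append, hlen, List.length_cons, List.length_nil] at hk
    rcases lt_or_ge (2 * k) p.length with h | h
    · rw [List.getD_eq_getElem?_getD, List.getElem?_append_left h,
        List.take_append_of_le_length (le_of_lt h), ← List.getD_eq_getElem?_getD]
      exact hfol k h
    · have hk2 : 2 * k = p.length + 1 := by omega
      rw [List.getD_eq_getElem?_getD, hk2]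
      have h1 : (p ++ [V, σ (p ++ [V])])[p.length + 1]? = some (σ (p ++ [V])) := by
        rw [List.getElem?_append_right (by omega)]
        simp
      have h2 : (p ++ [V, σ (p ++ [V])]).take (p.length + 1) = p ++ [V] := by
        rw [show p ++ [V, σ (p ++ [V])] = (p ++ [V]) ++ [σ (p ++ [V])] from by simp,
          List.take_append_of_le_length (by simp), List.take_of_length_le (by simp)]
      rw [h1, h2]
      rfl

lemma P_lastD : ∀ n, ∀ p ∈ P σ n, ∀ (h : p ≠ []),
    IsOpen (lastD p) ∧ (lastD p).Nonempty := by
  intro n p hp h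
  obtain ⟨hleg, hlen, _⟩ := P_legal hσ n p hp
  rw [lastD_of_ne_nil h]
  exact hleg.1 _ (List.getElem_mem _)

lemma P_ne_nil : ∀ n, ∀ p ∈ P σ n, p ≠ [] := by
  intro n p hp h
  obtain ⟨_, hlen, _⟩ := P_legal hσ n p hp
  rw [h] at hlen; simp at hlen

/-- Disjointness of last moves at the same level. -/
lemma P_disjoint : ∀ n, ∀ p ∈ P σ n, ∀ q ∈ P σ n, p ≠ q → Disjoint (lastD p) (lastD q) := by
  intro n
  induction n with
  | zero =>
    rintro p hp q hq hpq
    simp only [P, Set.mem_singleton_iff] at hp hq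
    exact absurd (hp.trans hq.symm) hpq
  | succ n ih =>
    rintro p' hp' q' hq' hpq
    simp only [P, Set.mem_iUnion] at hp' hq'
    obtain ⟨p, hp, V, hV, rfl⟩ := hp'
    obtain ⟨q, hq, W, hW, rfl⟩ := hq'
    have hlastp : lastD (p ++ [V, σ (p ++ [V])]) = σ (p ++ [V]) := by
      rw [lastD, List.getLast?_append]; rfl
    have hlastq : lastD (q ++ [W, σ (q ++ [W])]) = σ (q ++ [W]) := by
      rw [lastD, List.getLast?_append]; rfl
    rw [hlastp, hlastq]
    by_cases hpq2 : p = q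
    · subst hpq2
      have hVW : V ≠ W := fun h => hpq (by rw [h])
      exact (Amax_good σ p).2 hV hW hVW
    · have h1 : σ (p ++ [V]) ⊆ lastD p := by
        obtain ⟨hleg, hlen, _⟩ := P_legal hσ n p hp
        obtain ⟨hVo, hVne, hVsub⟩ := (Amax_good σ p).1 V hV
        have hpne : p ≠ [] := P_ne_nil hσ n p hp
        have hlegV : LegalHistory (p ++ [V]) := by
          refine legal_append_singleton hleg hVo hVne ?_
          intro U hU
          rw [List.getLast?_eq_getLast hpne] at hU
          simp only [Option.mem_some_iff] at hU
          subst hU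
          rw [lastD, List.getLast?_eq_getLast hpne] at hVsub
          exact hVsub
        have := (hσ (p ++ [V]) hlegV (by simp [hlen]; omega)).2.2
        refine (this V ?_).trans hVsub
        rw [List.getLast?_append]; simp
      have h2 : σ (q ++ [W]) ⊆ lastD q := by
        obtain ⟨hleg, hlen, _⟩ := P_legal hσ n q hq
        obtain ⟨hWo, hWne, hWsub⟩ := (Amax_good σ q).1 W hW
        have hqne : q ≠ [] := P_ne_nil hσ n q hq
        have hlegW : LegalHistory (q ++ [W]) := by
          refine legal_append_singleton hleg hWo hWne ?_
          intro U hU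
          rw [List.getLast?_eq_getLast hqne] at hU
          simp only [Option.mem_some_iff] at hU
          subst hU
          rw [lastD, List.getLast?_eq_getLast hqne] at hWsub
          exact hWsub
        have := (hσ (q ++ [W]) hlegW (by simp [hlen]; omega)).2.2
        refine (this W ?_).trans hWsub
        rw [List.getLast?_append]; simp
      exact (ih p hp q hq hpq2).mono h1 h2

/-- Every level-(n+1) position has a parent at level n which is a prefix,
with smaller last move. -/
lemma P_parent : ∀ n, ∀ p' ∈ P σ (n+1), ∃ p ∈ P σ n, p <+: p' ∧ lastD p' ⊆ lastD p := by
  intro n p' hp'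
  simp only [P, Set.mem_iUnion] at hp'
  obtain ⟨p, hp, V, hV, rfl⟩ := hp'
  refine ⟨p, hp, ⟨[V, σ (p ++ [V])], rfl⟩, ?_⟩
  have hlast : lastD (p ++ [V, σ (p ++ [V])]) = σ (p ++ [V]) := by
    rw [lastD, List.getLast?_append]; rfl
  rw [hlast]
  obtain ⟨hleg, hlen, _⟩ := P_legal hσ n p hp
  obtain ⟨hVo, hVne, hVsub⟩ := (Amax_good σ p).1 V hV
  have hpne : p ≠ [] := P_ne_nil hσ n p hp
  have hlegV : LegalHistory (p ++ [V]) := by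
    refine legal_append_singleton hleg hVo hVne ?_
    intro U hU
    rw [List.getLast?_eq_getLast hpne] at hU
    simp only [Option.mem_some_iff] at hU
    subst hU
    rw [lastD, List.getLast?_eq_getLast hpne] at hVsub
    exact hVsub
  have := (hσ (p ++ [V]) hlegV (by simp [hlen]; omega)).2.2
  refine (this V ?_).trans hVsub
  rw [List.getLast?_append]; simp

/-- Density of the responses below a position. -/
lemma dense_responses (n : ℕ) (p : List (Set X)) (hp : p ∈ P σ n) :
    lastD p ⊆ closure (⋃ V ∈ Amax σ p, σ (p ++ [V])) := by
  intro x hx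
  by_contra hxc
  rw [mem_closure_iff] at hxc
  push_neg at hxc
  obtain ⟨O, hOo, hxO, hOd⟩ := hxc
  set T := ⋃ V ∈ Amax σ p, σ (p ++ [V]) with hT
  obtain ⟨hleg, hlen, _⟩ := P_legal hσ n p hp
  have hpne : p ≠ [] := P_ne_nil hσ n p hp
  have hLo : IsOpen (lastD p) ∧ (lastD p).Nonempty := P_lastD hσ n p hp hpne
  set W := O ∩ lastD p with hW
  have hWo : IsOpen W := hOo.inter hLo.1
  have hWne : W.Nonempty := ⟨x, hxO, hx⟩
  have hWsub : W ⊆ lastD p := Set.inter_subset_right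
  have hlegW : LegalHistory (p ++ [W]) := by
    refine legal_append_singleton hleg hWo hWne ?_
    intro U hU
    rw [List.getLast?_eq_getLast hpne] at hU
    simp only [Option.mem_some_iff] at hU
    subst hU
    rw [lastD, List.getLast?_eq_getLast hpne] at hWsub
    exact hWsub
  obtain ⟨hso, hsne, hssub⟩ := hσ (p ++ [W]) hlegW (by simp [hlen]; omega)
  have hsW : σ (p ++ [W]) ⊆ W := by
    apply hssub
    rw [List.getLast?_append]; simp
  have hgood : Good σ p (insert W (Amax σ p)) := by
    constructor
    · rintro V hV
      rcases Set.mem_insert_iff.1 hV with rfl | hV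
      · exact ⟨hWo, hWne, hWsub⟩
      · exact (Amax_good σ p).1 V hV
    · rw [Set.pairwise_insert_of_symmetric]
      · refine ⟨(Amax_good σ p).2, ?_⟩
        intro V hV _
        refine Set.disjoint_left.2 fun y hy hy2 => ?_
        have hyO : y ∈ O := (hsW hy).1
        have hyT : y ∈ T := Set.mem_biUnion hV hy2
        exact Set.eq_empty_iff_forall_notMem.1 hOd y ⟨hyO, hyT⟩
  have hWmem : W ∈ Amax σ p := Amax_max σ p hgood (Set.subset_insert _ _) (Set.mem_insert _ _)
  obtain ⟨y, hy⟩ := hsne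
  have hyT : y ∈ T := Set.mem_biUnion hWmem hy
  have hyO : y ∈ O := (hsW hy).1
  exact Set.eq_empty_iff_forall_notMem.1 hOd y ⟨hyO, hyT⟩

end Strategy

end ChoquetAux

/-- A topological space is Baire iff player β has no winning strategy in the Choquet
game. -/
theorem baireSpace_iff_no_winning_strategy_choquet {X : Type*} [TopologicalSpace X] :
    BaireSpace X ↔ ¬ ∃ σ : List (Set X) → Set X, IsWinningStrategyBetaChoquet X σ := by
  constructor
  · -- Baire → no winning strategy
    rintro hB ⟨σ, hσ1, hσ2⟩
    have hU0 := hσ1 [] ChoquetAux.legal_nil rfl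
    -- the open "levels" of the tree
    set Wn : ℕ → Set X := fun n => ⋃ p ∈ ChoquetAux.P σ n, ChoquetAux.lastD p with hWn
    have hWno : ∀ n, IsOpen (Wn n) := by
      intro n
      apply isOpen_biUnion
      intro p hp
      exact (ChoquetAux.P_lastD hσ1 n p hp (ChoquetAux.P_ne_nil hσ1 n p hp)).1
    have hWdense : ∀ n, σ [] ⊆ closure (Wn n) := by
      intro n
      induction n with
      | zero =>
        refine subset_trans ?_ subset_closure
        intro x hx
        refine Set.mem_biUnion (show [σ []] ∈ ChoquetAux.P σ 0 from rfl) ?_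
        simpa [ChoquetAux.lastD] using hx
      | succ n ih =>
        have hstep : Wn n ⊆ closure (Wn (n + 1)) := by
          intro x hx
          simp only [hWn, Set.mem_iUnion] at hx
          obtain ⟨p, hp, hxp⟩ := hx
          have hcl := ChoquetAux.dense_responses hσ1 n p hp hxp
          refine closure_mono ?_ hcl
          intro y hy
          simp only [Set.mem_iUnion] at hy
          obtain ⟨V, hV, hy⟩ := hy
          have hmem : p ++ [V, σ (p ++ [V])] ∈ ChoquetAux.P σ (n + 1) := by
            simp only [ChoquetAux.P, Set.mem_iUnion]
            exact ⟨p, hp, V, hV, rfl⟩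
          refine Set.mem_biUnion hmem ?_
          rw [ChoquetAux.lastD_append_pair]
          exact hy
        calc σ [] ⊆ closure (Wn n) := ih
          _ ⊆ closure (closure (Wn (n + 1))) := closure_mono hstep
          _ = closure (Wn (n + 1)) := closure_closure
    set f : ℕ → Set X := fun n => Wn n ∪ (closure (σ []))ᶜ with hf
    have hfo : ∀ n, IsOpen (f n) := fun n => (hWno n).union isClosed_closure.isOpen_compl
    have hfd : ∀ n, Dense (f n) := by
      intro n x
      by_cases hx : x ∈ closure (σ [])
      · have h1 : closure (σ []) ⊆ closure (Wn n) := by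
          rw [← closure_closure (s := Wn n)]
          exact closure_mono (hWdense n)
        exact closure_mono (Set.subset_union_left) (h1 hx)
      · exact subset_closure (Set.mem_union_right _ hx)
    have hdense := hB.baire_property f hfo hfd
    obtain ⟨x, hxU, hxI⟩ := hdense.inter_open_nonempty (σ []) hU0.1 hU0.2.1
    have hxW : ∀ n, x ∈ Wn n := by
      intro n
      have := Set.mem_iInter.1 hxI n
      rcases this with h | h
      · exact h
      · exact absurd (subset_closure hxU) h
    -- choose the chain of positions through x
    have hex : ∀ n, ∃ p ∈ ChoquetAux.P σ n, x ∈ ChoquetAux.lastD p := by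
      intro n
      have := hxW n
      simp only [hWn, Set.mem_iUnion] at this
      obtain ⟨q, hq, hxq⟩ := this
      exact ⟨q, hq, hxq⟩
    choose p hp hxp using hex
    have hlen : ∀ n, (p n).length = 2 * n + 1 := fun n => (ChoquetAux.P_legal hσ1 n _ (hp n)).2.1
    have hleg : ∀ n, LegalHistory (p n) := fun n => (ChoquetAux.P_legal hσ1 n _ (hp n)).1
    have hfol : ∀ n, ChoquetAux.FollowsSigma σ (p n) :=
      fun n => (ChoquetAux.P_legal hσ1 n _ (hp n)).2.2
    have hpre : ∀ n, p n <+: p (n + 1) := by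
      intro n
      obtain ⟨q, hq, hqpre, hsub⟩ := ChoquetAux.P_parent hσ1 n (p (n + 1)) (hp (n + 1))
      have hqp : q = p n := by
        by_contra hne
        exact Set.disjoint_left.1
          (ChoquetAux.P_disjoint hσ1 n q hq (p n) (hp n) hne) (hsub (hxp (n + 1))) (hxp n)
      rwa [hqp] at hqpre
    have hpre' : ∀ m n, m ≤ n → p m <+: p n := by
      intro m n hmn
      induction n, hmn using Nat.le_induction with
      | base => exact List.prefix_refl _
      | succ n hmn ih => exact ih.trans (hpre n)
    set B : ℕ → Set X := fun m => (p m).getD m ∅ with hBdef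
    have hBeq : ∀ n m, m < 2 * n + 1 → B m = (p n).getD m ∅ := by
      intro n m hm
      rcases le_total m n with h | h
      · exact ChoquetAux.prefix_getD (hpre' m n h) (by rw [hlen]; omega)
      · exact (ChoquetAux.prefix_getD (hpre' n m h) (by rw [hlen]; omega)).symm
    have hBmem : ∀ m, IsOpen (B m) ∧ (B m).Nonempty := by
      intro m
      have hm : m < (p m).length := by rw [hlen]; omega
      rw [hBdef]
      simp only
      rw [ChoquetAux.getD_eq_getElem' _ hm]
      exact (hleg m).1 _ (List.getElem_mem hm)
    have hBdec : ∀ m, B (m + 1) ⊆ B m := by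
      intro m
      have h1 : B (m + 1) = (p (m + 1)).getD (m + 1) ∅ := rfl
      have h2 : B m = (p (m + 1)).getD m ∅ := hBeq (m + 1) m (by omega)
      have hm1 : m + 1 < (p (m + 1)).length := by rw [hlen]; omega
      rw [h1, h2, ChoquetAux.getD_eq_getElem' _ hm1,
        ChoquetAux.getD_eq_getElem' _ (by omega : m < (p (m + 1)).length)]
      exact ChoquetAux.legal_getElem_subset (hleg (m + 1)) (by omega) hm1
    have hB2k : ∀ k, B (2 * k) = σ (List.ofFn fun i : Fin (2 * k) => B i) := by
      intro k
      have h1 : B (2 * k) = (p k).getD (2 * k) ∅ := hBeq k (2 * k) (by omega)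
      have h2 := hfol k k (by rw [hlen]; omega)
      have h3 : (List.ofFn fun i : Fin (2 * k) => B i) = (p k).take (2 * k) := by
        apply List.ext_getElem
        · simp [hlen]
        · intro i hi1 hi2
          simp only [List.getElem_ofFn]
          have hik : i < 2 * k := by simpa using hi1
          rw [List.getElem_take]
          rw [← ChoquetAux.getD_eq_getElem' (p k) (by rw [hlen]; omega)]
          exact hBeq k i (by omega)
      rw [h1, h2, h3]
    have hempty := hσ2 B hBmem hBdec hB2k
    have hxB : ∀ m, x ∈ B m := by
      have hx2 : ∀ n, x ∈ B (2 * n) := by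
        intro n
        have hne : p n ≠ [] := ChoquetAux.P_ne_nil hσ1 n _ (hp n)
        have : ChoquetAux.lastD (p n) = (p n).getD (2 * n) ∅ := by
          rw [ChoquetAux.lastD_of_ne_nil hne,
            ChoquetAux.getD_eq_getElem' _ (by rw [hlen]; omega)]
          congr 1
          rw [hlen]
          omega
        rw [hBeq n (2 * n) (by omega), ← this]
        exact hxp n
      have hmono : ∀ i j, i ≤ j → B j ⊆ B i := by
        intro i j hij
        induction j, hij using Nat.le_induction with
        | base => exact subset_rfl
        | succ j hij ih => exact (hBdec j).trans ih
      intro m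
      exact hmono m (2 * m) (by omega) (hx2 m)
    exact Set.eq_empty_iff_forall_notMem.1 hempty x (Set.mem_iInter.2 hxB)
  · -- no winning strategy → Baire
    intro h
    by_contra hB
    apply h
    have hnb : ¬ ∀ g : ℕ → Set X, (∀ n, IsOpen (g n)) → (∀ n, Dense (g n)) →
        Dense (⋂ n, g n) := fun hg => hB ⟨hg⟩
    push_neg at hnb
    obtain ⟨g, hgo, hgd, hgnd⟩ := hnb
    rw [dense_iff_inter_open] at hgnd
    push_neg at hgnd
    obtain ⟨U, hUo, hUne, hUg⟩ := hgnd
    refine ⟨fun l => l.getLast?.elim U fun L => L ∩ g (l.length / 2 - 1), ?_, ?_⟩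
    · intro l hl hlen
      rcases List.eq_nil_or_concat l with rfl | ⟨l', L, rfl⟩
      · simpa using ⟨hUo, hUne⟩
      · simp only [List.concat_eq_append] at hl hlen ⊢
        have hL : (l' ++ [L]).getLast? = some L := by
          rw [List.getLast?_append]; simp
        have hLmem : L ∈ l' ++ [L] := by simp
        obtain ⟨hLo, hLne⟩ := hl.1 L hLmem
        rw [hL]
        simp only [Option.elim_some]
        refine ⟨hLo.inter (hgo _), (hgd _).inter_open_nonempty L hLo hLne, ?_⟩
        intro V hV
        simp only [Option.mem_some_iff] at hV
        subst hV
        exact Set.inter_subset_left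
    · intro B hBon hBdec hBσ
      have h0 : B 0 = U := by
        have := hBσ 0
        simp only [Nat.mul_zero, List.ofFn_zero, List.getLast?_nil, Option.elim_none] at this
        exact this
      have hk : ∀ k, B (2 * (k + 1)) ⊆ g k := by
        intro k
        have h1 := hBσ (k + 1)
        set l : List (Set X) := List.ofFn fun i : Fin (2 * (k + 1)) => B i with hldef
        have hlen : l.length = 2 * (k + 1) := by simp [hldef]; omega
        have hlast : l.getLast? = some (B (2 * k + 1)) := by
          rw [List.getLast?_eq_getElem?, hlen]
          rw [List.getElem?_eq_getElem (by omega)]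
          simp only [hldef, List.getElem_ofFn]
          have hidx : 2 * (k + 1) - 1 = 2 * k + 1 := by omega
          rw [hidx]
        rw [h1]
        simp only [hlast, Option.elim_some, hlen]
        have hdiv : 2 * (k + 1) / 2 - 1 = k := by omega
        rw [hdiv]
        exact Set.inter_subset_right
      rw [Set.eq_empty_iff_forall_notMem]
      intro y hy
      have hyU : y ∈ U := h0 ▸ Set.mem_iInter.1 hy 0
      have hyg : y ∈ ⋂ n, g n := Set.mem_iInter.2 fun n => hk n (Set.mem_iInter.1 hy (2 * (n + 1)))
      exact Set.eq_empty_iff_forall_notMem.1 hUg y ⟨hyU, hyg⟩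
end
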